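/- Fix an anchor point (b_a, y_a) with 0 < b_a < y_a, write r_a := b_a/y_a and Δ_a := y_a − b_a, and fix θ̄ ∈ [0,1) with θ := 1 − θ̄ such that θ̄ < r_a < 1. Let A := { α > 0 : α·y_a² ≥ 2Δ_a and ( α·y_a ≤ θ or α(b_a − θ̄·y_a) ≥ θ²/2 ) } be the set of decay slopes α that admit x_U = 0. Then A has a minimum α̂, and α̂ = 2(1 − r_a)/y_a if r_a ≥ (1 + θ̄)/2, while α̂ = θ²/(2(b_a − θ̄·y_a)) if r_a ≤ (1 + θ̄)/2; in the boundary case r_a = (1 + θ̄)/2 both formulas give the common value θ/y_a. -/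

import Mathlib

lemma case1 (ba ya θbar : ℝ)
    (hba : 0 < ba) (hbya : ba < ya)
    (hθ1 : θbar < 1)
    (h : (1 + θbar) / 2 ≤ ba / ya) :
    IsLeast {α : ℝ | 0 < α ∧ 2 * (ya - ba) ≤ α * ya ^ 2 ∧
      (α * ya ≤ 1 - θbar ∨ (1 - θbar) ^ 2 / 2 ≤ α * (ba - θbar * ya))}
      (2 * (1 - ba / ya) / ya) := by
  have hya : 0 < ya := hba.trans hbya
  have hy2 : (0:ℝ) < ya ^ 2 := by positivity
  have hh : (1 + θbar) / 2 * ya ≤ ba := (le_div_iff₀ hya).mp h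
  have key : 2 * (1 - ba / ya) / ya * ya ^ 2 = 2 * (ya - ba) := by
    rw [div_mul_eq_mul_div, div_eq_iff hya.ne']
    field_simp
  constructor
  · refine ⟨?_, key.ge, Or.inl ?_⟩
    · have : 0 < 1 - ba / ya := by
        have : ba / ya < 1 := (div_lt_one hya).mpr hbya
        linarith
      positivity
    · have : 2 * (1 - ba / ya) / ya * ya = 2 * (1 - ba / ya) := by
        field_simp
      rw [this]
      have : ba / ya * ya = ba := by field_simp
      nlinarith [(div_le_one hya).mpr hbya.le]
  · rintro α ⟨hα0, h2, -⟩
    rw [← mul_le_mul_iff_of_pos_right hy2, key]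
    exact h2

lemma case2 (ba ya θbar : ℝ)
    (hba : 0 < ba) (hbya : ba < ya)
    (hθ1 : θbar < 1)
    (hra : θbar < ba / ya)
    (h : ba / ya ≤ (1 + θbar) / 2) :
    IsLeast {α : ℝ | 0 < α ∧ 2 * (ya - ba) ≤ α * ya ^ 2 ∧
      (α * ya ≤ 1 - θbar ∨ (1 - θbar) ^ 2 / 2 ≤ α * (ba - θbar * ya))}
      ((1 - θbar) ^ 2 / (2 * (ba - θbar * ya))) := by
  have hya : 0 < ya := hba.trans hbya
  have hc : θbar * ya < ba := (lt_div_iff₀ hya).mp hra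
  have hc0 : 0 < ba - θbar * ya := by linarith
  have hθ : 0 < 1 - θbar := by linarith
  have hh : ba ≤ (1 + θbar) / 2 * ya := (div_le_iff₀ hya).mp h
  -- θ·ya ≤ 2Δ
  have hcase : (1 - θbar) * ya ≤ 2 * (ya - ba) := by nlinarith
  constructor
  · refine ⟨by positivity, ?_, Or.inr ?_⟩
    · rw [div_mul_eq_mul_div, le_div_iff₀ (by linarith)]
      nlinarith [sq_nonneg ((ya - ba) - (ba - θbar * ya))]
    · have : (1 - θbar) ^ 2 / (2 * (ba - θbar * ya)) * (ba - θbar * ya)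
          = (1 - θbar) ^ 2 / 2 := by
        field_simp
      rw [this]
  · rintro α ⟨hα0, h2, hor⟩
    rw [div_le_iff₀ (by linarith : (0:ℝ) < 2 * (ba - θbar * ya))]
    rcases hor with hl | hr
    · -- forced boundary: α·ya ≤ θ together with the rest gives equality
      have h3 : α * ya ^ 2 ≤ (1 - θbar) * ya := by nlinarith
      have h4 : 2 * (ya - ba) = (1 - θbar) * ya := by nlinarith
      nlinarith
    · nlinarith

/-- Proposition `prop:alpha`: the set `A` of decay slopes `α` that
    admit `x_U = 0` has a minimum `α̂`, equal to `2(1 − r_a)/y_a` when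
    `r_a ≥ (1 + θ̄)/2` and `θ²/(2(b_a − θ̄·y_a))` when `r_a ≤ (1 + θ̄)/2`; in the
    boundary case both formulas give `θ/y_a`. -/
theorem alphaHat_isLeast
    (ba ya θbar : ℝ)
    (hba : 0 < ba) (hbya : ba < ya)
    (hθ0 : 0 ≤ θbar) (hθ1 : θbar < 1)
    (hra : θbar < ba / ya) (hra1 : ba / ya < 1) :
    let θ : ℝ := 1 - θbar
    let A : Set ℝ := {α : ℝ | 0 < α ∧ 2 * (ya - ba) ≤ α * ya ^ 2 ∧
      (α * ya ≤ θ ∨ θ ^ 2 / 2 ≤ α * (ba - θbar * ya))}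
    IsLeast A (if (1 + θbar) / 2 ≤ ba / ya then 2 * (1 - ba / ya) / ya
      else θ ^ 2 / (2 * (ba - θbar * ya))) ∧
    ((1 + θbar) / 2 ≤ ba / ya → IsLeast A (2 * (1 - ba / ya) / ya)) ∧
    (ba / ya ≤ (1 + θbar) / 2 → IsLeast A (θ ^ 2 / (2 * (ba - θbar * ya)))) ∧
    (ba / ya = (1 + θbar) / 2 →
      2 * (1 - ba / ya) / ya = θ / ya ∧ θ ^ 2 / (2 * (ba - θbar * ya)) = θ / ya) := by
  intro θ A
  have hya : 0 < ya := hba.trans hbya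
  refine ⟨?_, fun h => case1 ba ya θbar hba hbya hθ1 h,
    fun h => case2 ba ya θbar hba hbya hθ1 hra h, fun heq => ?_⟩
  · split_ifs with h
    · exact case1 ba ya θbar hba hbya hθ1 h
    · exact case2 ba ya θbar hba hbya hθ1 hra (le_of_not_ge h)
  · have hb : ba = (1 + θbar) / 2 * ya := by
      field_simp at heq; linarith
    constructor
    · rw [heq]; field_simp [θ]; ring
    · rw [hb]; show (1 - θbar)^2 / _ = (1 - θbar) / ya
      rw [div_eq_div_iff (by nlinarith) hya.ne']
      ring
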